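/- There exists β* ∈ (0.84, 0.842) such that for all β ∈ (β*, (1/2)(1+1/√2)], h(β) < 3 − 4·(1/2 + √(1/8 − (β−1/2)²)); i.e., the quantum monogamy relation ensures the DIQKD security condition in a nonempty quantum-attainable interval. -/
import Mathlib


/-- Binary Shannon entropy (base-2 logarithm). -/
noncomputable def binH (p : ℝ) : ℝ :=
  -(p * Real.logb 2 p) - (1 - p) * Real.logb 2 (1 - p)

lemma binH_eq (p : ℝ) : binH p = Real.binEntropy p / Real.log 2 := by
  simp only [binH, Real.binEntropy, Real.logb, Real.log_inv]
  ring

lemma log_lt_half_sub (x : ℝ) (hx : 1 < x) : Real.log x < (x - x⁻¹) / 2 := by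
  have h0 : (0:ℝ) < x := by linarith
  have := Real.sinh_log h0
  have hlog : 0 < Real.log x := Real.log_pos hx
  have := Real.self_lt_sinh_iff.mpr hlog
  linarith [Real.sinh_log h0, this]

lemma log_2000_1683 : Real.log (2000/1683) < 0.1734271 := by
  have h := log_lt_half_sub (2000/1683) (by norm_num)
  have h2 : ((2000:ℝ)/1683 - ((2000:ℝ)/1683)⁻¹) / 2 < 0.1734271 := by norm_num
  linarith

lemma log_500_317 : Real.log (500/317) < 0.4596666 := by
  have hy : Real.sqrt (500/317) ≤ 1.255905 := by
    rw [show (1.255905:ℝ) = Real.sqrt (1.255905^2) by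
      rw [Real.sqrt_sq (by norm_num)]]
    exact Real.sqrt_le_sqrt (by norm_num)
  have hy1 : (1:ℝ) < Real.sqrt (500/317) := by
    nlinarith [Real.sq_sqrt (show (0:ℝ) ≤ 500/317 by norm_num),
      Real.sqrt_nonneg (500/317 : ℝ)]
  have hlog := log_lt_half_sub _ hy1
  have hsq : Real.log (Real.sqrt (500/317)) = Real.log (500/317) / 2 :=
    Real.log_sqrt (by norm_num)
  have hyinv : (1.255905:ℝ)⁻¹ ≤ (Real.sqrt (500/317))⁻¹ := by
    apply inv_anti₀ (by linarith) hy
  have h3 : Real.log (Real.sqrt (500/317)) < ((1.255905:ℝ) - (1.255905:ℝ)⁻¹) / 2 := by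
    linarith
  have h4 : ((1.255905:ℝ) - (1.255905:ℝ)⁻¹) < 0.4596666 := by norm_num
  linarith

lemma binH_num : binH 0.8415 < 1 - 4 * 0.091531 := by
  rw [binH_eq]
  have hlog2 : (0.6931471803:ℝ) < Real.log 2 := Real.log_two_gt_d9
  have hlog2' : (0:ℝ) < Real.log 2 := by linarith
  have h1 : -Real.log 0.8415 < 0.1734271 := by
    have : Real.log 0.8415 = -Real.log (2000/1683) := by
      rw [← Real.log_inv]; norm_num
    rw [this]
    simpa using log_2000_1683
  have h2 : -Real.log 0.1585 < 2 * Real.log 2 + 0.4596666 := by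
    have e1 : -Real.log 0.1585 = Real.log (2000/317) := by
      rw [← Real.log_inv]; norm_num
    have e2 : Real.log (2000/317) = Real.log (500/317) + Real.log 4 := by
      rw [← Real.log_mul (by norm_num) (by norm_num)]; norm_num
    have e3 : Real.log 4 = 2 * Real.log 2 := by
      rw [show (4:ℝ) = 2^2 by norm_num, Real.log_pow]; push_cast; ring
    have := log_500_317
    rw [e1, e2, e3]; linarith
  have hb : Real.binEntropy 0.8415 =
      0.8415 * (-Real.log 0.8415) + 0.1585 * (-Real.log 0.1585) := by
    simp only [Real.binEntropy, Real.log_inv]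
    norm_num
  rw [div_lt_iff₀ hlog2', hb]
  nlinarith [h1, h2, hlog2]

/-- there is a threshold β* ∈ (0.84, 0.842) such that the quantum
    monogamy relation ensures the DIQKD security condition for all
    β ∈ (β*, (1/2)(1+1/√2)]. -/
theorem quantum_security_interval :
    ∃ βstar : ℝ, 0.84 < βstar ∧ βstar < 0.842 ∧
      ∀ β : ℝ, βstar < β → β ≤ (1/2) * (1 + 1 / Real.sqrt 2) →
        binH β < 3 - 4 * (1/2 + Real.sqrt (1/8 - (β - 1/2)^2)) := by
  refine ⟨0.8415, by norm_num, by norm_num, fun β hβl hβu => ?_⟩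
  have hs2 : (1:ℝ) ≤ Real.sqrt 2 := by
    nlinarith [Real.sq_sqrt (show (0:ℝ) ≤ 2 by norm_num), Real.sqrt_nonneg (2:ℝ)]
  have hs2' : (0:ℝ) < Real.sqrt 2 := by linarith
  have hβ1 : β ≤ 1 := by
    have h1 : 1 / Real.sqrt 2 ≤ 1 := by
      rw [div_le_one hs2']; exact hs2
    linarith
  -- monotonicity of binH
  have hmono : binH β ≤ binH 0.8415 := by
    rw [binH_eq, binH_eq]
    have hl2 : (0:ℝ) < Real.log 2 := Real.log_pos (by norm_num)
    exact div_le_div_of_nonneg_right (Real.binEntropy_strictAntiOn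
      ⟨by norm_num, by norm_num⟩ ⟨by norm_num; linarith, hβ1⟩ hβl).le hl2.le
  -- sqrt bound
  have hsqrt : Real.sqrt (1/8 - (β - 1/2)^2) ≤ 0.091531 := by
    have h1 : (1:ℝ)/8 - (β - 1/2)^2 ≤ (0.091531:ℝ)^2 := by nlinarith
    calc Real.sqrt (1/8 - (β - 1/2)^2) ≤ Real.sqrt ((0.091531:ℝ)^2) :=
          Real.sqrt_le_sqrt h1
      _ = 0.091531 := Real.sqrt_sq (by norm_num)
  have := binH_num
  have : binH β < 1 - 4 * 0.091531 := lt_of_le_of_lt hmono this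
  linarith
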